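/- arXiv:2206.08797 — 2 statements merged into one kernel-verified Lean document; each statement's English description precedes it below -/
import Mathlib

section
/- Let n ≥ 1 and let Y be an n×n complex Hermitian matrix whose largest eigenvalue δ has multiplicity one (exactly one eigenvalue, counted with multiplicity, equals δ). Let λ be a real number with λ ≥ δ and set X = λ·I − Y. If W is an n×n complex positive semidefinite Hermitian matrix satisfying X·W = 0, then rank(W) ≤ 1. -/
open Matrix ComplexOrder

/-- Let `n ≥ 1` and let `Y` be an `n × n` complex Hermitian matrix whose
largest eigenvalue `δ` has multiplicity one (exactly one eigenvalue, counted with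
multiplicity, equals `δ`).  Let `λ ≥ δ` and set `X = λ • I - Y`.  If `W` is positive
semidefinite and `X * W = 0`, then `rank W ≤ 1`. -/
theorem stmt0 {n : ℕ} (hn : 1 ≤ n) (Y : Matrix (Fin n) (Fin n) ℂ)
    (hY : Y.IsHermitian) (δ : ℝ)
    (hδmax : ∀ i, hY.eigenvalues i ≤ δ)
    (hδsimple : ∃! i, hY.eigenvalues i = δ)
    (lam : ℝ) (hlam : δ ≤ lam)
    (X : Matrix (Fin n) (Fin n) ℂ)
    (hX : X = lam • (1 : Matrix (Fin n) (Fin n) ℂ) - Y)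
    (W : Matrix (Fin n) (Fin n) ℂ) (hW : W.PosSemidef)
    (hXW : X * W = 0) :
    W.rank ≤ 1 := by
  classical
  set U : Matrix (Fin n) (Fin n) ℂ := (hY.eigenvectorUnitary : Matrix (Fin n) (Fin n) ℂ) with hU
  have hUU : U * star U = 1 := (Matrix.mem_unitaryGroup_iff).mp hY.eigenvectorUnitary.2
  have hUU' : star U * U = 1 := (Matrix.mem_unitaryGroup_iff').mp hY.eigenvectorUnitary.2
  set d : Fin n → ℂ := fun i => (lam : ℂ) - (hY.eigenvalues i : ℂ) with hd
  -- factor X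
  have hXfact : X = U * diagonal d * star U := by
    rw [hX, hY.spectral_theorem, Unitary.conjStarAlgAut_apply, ← hU]
    have h1 : lam • (1 : Matrix (Fin n) (Fin n) ℂ) = U * ((lam : ℂ) • 1) * star U := by
      rw [Matrix.mul_smul, Matrix.smul_mul, mul_one, hUU]
      norm_num
    rw [h1, ← Matrix.sub_mul, ← Matrix.mul_sub]
    congr 1
    rw [Matrix.smul_one_eq_diagonal, ← Matrix.diagonal_sub]
    rfl
  -- rank of X
  have hdetU : IsUnit U.det := by
    apply IsUnit.of_mul_eq_one (star U).det
    rw [← Matrix.det_mul, hUU, Matrix.det_one]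
  have hdetU' : IsUnit (star U).det := by
    apply IsUnit.of_mul_eq_one U.det
    rw [← Matrix.det_mul, hUU', Matrix.det_one]
  have hrankX : X.rank = Fintype.card {i // d i ≠ 0} := by
    rw [hXfact, Matrix.rank_mul_eq_left_of_isUnit_det _ _ hdetU',
      Matrix.rank_mul_eq_right_of_isUnit_det _ _ hdetU, Matrix.rank_diagonal]
  -- the zero set of d is a subsingleton
  have heq : ∀ i : Fin n, d i = 0 → hY.eigenvalues i = δ := by
    intro i hi
    have hi' : hY.eigenvalues i = lam := by
      have := (sub_eq_zero.mp hi).symm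
      exact_mod_cast this
    exact le_antisymm (hδmax i) (hi' ▸ hlam)
  have hcard0 : Fintype.card {i // d i = 0} ≤ 1 := by
    rw [Fintype.card_le_one_iff]
    rintro ⟨i, hi⟩ ⟨j, hj⟩
    obtain ⟨k, -, hk⟩ := hδsimple
    have : i = j := by rw [hk i (heq i hi), hk j (heq j hj)]
    exact Subtype.ext this
  have hcardsum : Fintype.card {i // d i ≠ 0} + Fintype.card {i // d i = 0} = n := by
    have h1 : Fintype.card {i // d i ≠ 0} = n - Fintype.card {i // d i = 0} := by
      simpa [ne_eq] using Fintype.card_subtype_compl (fun i : Fin n => d i = 0)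
    have hle : Fintype.card {i // d i = 0} ≤ n := by
      simpa using Fintype.card_subtype_le (fun i : Fin n => d i = 0)
    omega
  -- range of W is contained in kernel of X
  have hle : LinearMap.range W.mulVecLin ≤ LinearMap.ker X.mulVecLin := by
    rintro v ⟨u, rfl⟩
    have h0 : (X * W).mulVecLin u = 0 := by rw [hXW]; simp
    simpa [Matrix.mulVecLin_mul] using h0
  have hrn := LinearMap.finrank_range_add_finrank_ker X.mulVecLin
  rw [Module.finrank_pi, Fintype.card_fin] at hrn
  have hWrank : W.rank ≤ Module.finrank ℂ (LinearMap.ker X.mulVecLin) :=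
    Submodule.finrank_mono hle
  have hXr : Module.finrank ℂ (LinearMap.range X.mulVecLin) = X.rank := rfl
  omega
end

section
/- Let S be a nonempty set, F, G : S → ℝ with F − G bounded above on S, and for each x ∈ S let Ĝ(·, x) : S → ℝ satisfy Ĝ(y, x) ≥ G(y) for all y ∈ S and Ĝ(x, x) = G(x). Let (xₙ) be a sequence in S such that for every n, xₙ₊₁ maximizes y ↦ F(y) − Ĝ(y, xₙ) over S. Then the real sequence (F(xₙ) − G(xₙ)) is nondecreasing and converges. -/
/-- With a surrogate `Ĝ` that is a tight global upper bound of `G`, if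
`F - G` is bounded above and each `xₙ₊₁` maximizes `y ↦ F(y) - Ĝ(y, xₙ)`, then the sequence
`F(xₙ) - G(xₙ)` is nondecreasing and converges. -/
theorem stmt12 {S : Type*} [Nonempty S] (F G : S → ℝ) (Ghat : S → S → ℝ)
    (hbdd : BddAbove (Set.range fun y => F y - G y))
    (hub : ∀ x y, G y ≤ Ghat y x) (htight : ∀ x, Ghat x x = G x)
    (x : ℕ → S)
    (hmax : ∀ n, ∀ y, F y - Ghat y (x n) ≤ F (x (n + 1)) - Ghat (x (n + 1)) (x n)) :
    Monotone (fun m => F (x m) - G (x m)) ∧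
      ∃ l : ℝ, Filter.Tendsto (fun m => F (x m) - G (x m)) Filter.atTop (nhds l) := by
  have hmono : Monotone (fun m => F (x m) - G (x m)) := by
    apply monotone_nat_of_le_succ
    intro n
    have h1 : F (x n) - G (x n) ≤ F (x (n + 1)) - Ghat (x (n + 1)) (x n) := by
      have := hmax n (x n)
      rwa [htight] at this
    have h2 : F (x (n + 1)) - Ghat (x (n + 1)) (x n) ≤ F (x (n + 1)) - G (x (n + 1)) := by
      have := hub (x n) (x (n + 1)); linarith
    exact h1.trans h2
  refine ⟨hmono, ?_⟩
  have hb : BddAbove (Set.range fun m => F (x m) - G (x m)) := by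
    obtain ⟨b, hb⟩ := hbdd
    exact ⟨b, fun v ⟨m, hm⟩ => hm ▸ hb ⟨x m, rfl⟩⟩
  exact ⟨_, tendsto_atTop_ciSup hmono hb⟩
end
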